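/- Fix d ≥ 1, m > 0, M > 0, s ≥ 1, a finite nonempty index set J with |J| = n ≥ s, a time step Δt > 0, an integer L ≥ 1, and T = L·Δt. Let V₁ : ℝ^d → ℝ be continuously differentiable with ‖∇V₁(x)‖ ≤ M for all x, and for each j ∈ J let ψ_j : ℝ^d → ℝ be twice continuously differentiable with ‖∇ψ_j(x)‖ ≤ M and ‖∇²ψ_j(x)‖ie ≤ M (operator norm) for all x. On a probability space (Ω, F, P), let X⁰, P⁰ : Ω → ℝ^d be random initial data with E‖P⁰‖⁴ ≤ K < ∞, and let ξ₁, …, ξ_L be random subsets of J of size s, each uniformly distributed over all size-s subsets, such that X⁰, P⁰, ξ₁, …, ξ_L are mutually independent. Let (x̃(t), p̃(t)), t ∈ [0, T], be the random batch trajectory: x̃(0) = X⁰, p̃(0) = P⁰, and on each interval [(ℓ−1)Δt, ℓΔt), ℓ = 1, …, L, x̃'(t) = p̃(t)/m and p̃'(t) = −∇V₁(x̃(t)) + (1/s) Σ_{j ∈ ξ_ℓ} ∇ψ_j(x̃(t)). Then there is a constant C > 0 depending only on m, M, and K (independent of n, s, L, Δt, and the realizations of the random batches) such that sup_{0 ≤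 t ≤ T} E‖p̃(t)‖⁴ ≤ C (1 + T⁴). -/

import Mathlib

open MeasureTheory
open scoped ENNReal

/-- Uniform fourth-moment bound for the momentum of the random batch
Hamiltonian dynamics: under boundedness of `∇V₁`, `∇ψ_j`, `∇²ψ_j` by `M` and a fourth
moment bound `E‖P⁰‖⁴ ≤ K` on the initial momentum, there is `C > 0`, depending only on
`m`, `M` and `K` (independent of `n`, `s`, `L`, `Δt` and the random batches), such that
`sup_{0 ≤ t ≤ T} E‖p̃(t)‖⁴ ≤ C (1 + T⁴)`. -/
theorem random_batch_momentum_fourth_moment_bound :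
    ∀ m M K : ℝ, 0 < m → 0 < M → 0 ≤ K →
    ∃ C : ℝ, 0 < C ∧
    ∀ (d : ℕ), 1 ≤ d →
    ∀ (n s : ℕ), 1 ≤ s → s ≤ n →
    ∀ (Δt : ℝ), 0 < Δt →
    ∀ (L : ℕ), 1 ≤ L →
    ∀ (T : ℝ), T = L * Δt →
    ∀ (V₁ : EuclideanSpace ℝ (Fin d) → ℝ), ContDiff ℝ 1 V₁ →
    (∀ x, ‖gradient V₁ x‖ ≤ M) →
    ∀ (ψ : Fin n → EuclideanSpace ℝ (Fin d) → ℝ), (∀ j, ContDiff ℝ 2 (ψ j)) →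
    (∀ j x, ‖gradient (ψ j) x‖ ≤ M) →
    (∀ j x, ‖fderiv ℝ (fun y => gradient (ψ j) y) x‖ ≤ M) →
    ∀ (Ω : Type) (mΩ : MeasurableSpace Ω) (μ : Measure Ω), IsProbabilityMeasure μ →
    ∀ (X0 P0 : Ω → EuclideanSpace ℝ (Fin d)), Measurable X0 → Measurable P0 →
    (∫⁻ ω, (‖P0 ω‖₊ : ℝ≥0∞) ^ 4 ∂μ) ≤ ENNReal.ofReal K →
    ∀ ξ : Fin L → Ω → Finset (Fin n),
    (∀ ℓ A, MeasurableSet {ω | ξ ℓ ω = A}) →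
    (∀ ℓ ω, (ξ ℓ ω).card = s) →
    -- each batch is uniformly distributed over the size-`s` subsets
    (∀ ℓ (A : Finset (Fin n)), A.card = s →
      μ {ω | ξ ℓ ω = A} = ((n.choose s : ℝ≥0∞))⁻¹) →
    -- `X⁰, P⁰, ξ₁, …, ξ_L` are mutually independent
    (∀ S : Set (EuclideanSpace ℝ (Fin d) × EuclideanSpace ℝ (Fin d)), MeasurableSet S →
      ∀ A : Fin L → Finset (Fin n),
        μ ({ω | (X0 ω, P0 ω) ∈ S} ∩ ⋂ ℓ, {ω | ξ ℓ ω = A ℓ}) =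
          μ {ω | (X0 ω, P0 ω) ∈ S} * ∏ ℓ, μ {ω | ξ ℓ ω = A ℓ}) →
    ∀ xr pr : Ω → ℝ → EuclideanSpace ℝ (Fin d),
    (∀ ω, Continuous (xr ω)) → (∀ ω, Continuous (pr ω)) →
    (∀ ω, xr ω 0 = X0 ω) → (∀ ω, pr ω 0 = P0 ω) →
    -- random batch dynamics on each subinterval `[(ℓ-1)Δt, ℓΔt)`
    (∀ ω (ℓ : Fin L), ∀ t ∈ Set.Ico ((ℓ : ℝ) * Δt) (((ℓ : ℝ) + 1) * Δt),
      HasDerivWithinAt (xr ω) (m⁻¹ • pr ω t)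
        (Set.Ico ((ℓ : ℝ) * Δt) (((ℓ : ℝ) + 1) * Δt)) t ∧
      HasDerivWithinAt (pr ω)
        (-(gradient V₁ (xr ω t)) + (s : ℝ)⁻¹ • ∑ j ∈ ξ ℓ ω, gradient (ψ j) (xr ω t))
        (Set.Ico ((ℓ : ℝ) * Δt) (((ℓ : ℝ) + 1) * Δt)) t) →
    (∀ t, Measurable fun ω => pr ω t) →
    ∀ t ∈ Set.Icc (0 : ℝ) T,
      (∫⁻ ω, (‖pr ω t‖₊ : ℝ≥0∞) ^ 4 ∂μ) ≤ ENNReal.ofReal (C * (1 + T ^ 4)) := by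
  intro m M K hm hM hK
  refine ⟨8 * K + 128 * M ^ 4 + 1, by positivity, ?_⟩
  intro d hd n s hs hsn Δt hΔt L hL T hT V₁ hV₁ hgV ψ hψ hgψ hHψ Ω mΩ μ hμ
    X0 P0 hX0 hP0 hKb ξ hξm hξc hξu hind xr pr hxc hpc hx0 hp0 hdyn hprm t ht
  have hT0 : 0 ≤ T := by
    rw [hT]; positivity
  -- pointwise pathwise bound on ‖pr ω t‖
  have key : ∀ ω, ∀ u ∈ Set.Icc (0 : ℝ) T, ‖pr ω u - P0 ω‖ ≤ 2 * M * u := by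
    intro ω
    have main : ∀ ℓ : ℕ, ℓ ≤ L → ∀ u ∈ Set.Icc (0 : ℝ) ((ℓ : ℝ) * Δt),
        ‖pr ω u - P0 ω‖ ≤ 2 * M * u := by
      intro ℓ
      induction ℓ with
      | zero =>
        intro _ u hu
        simp only [Nat.cast_zero, zero_mul] at hu
        have : u = 0 := le_antisymm hu.2 hu.1
        simp [this, hp0 ω]
      | succ k ih =>
        intro hkL u hu
        have hkL' : k < L := hkL
        have ihk := ih (le_of_lt hkL')
        rcases le_or_gt u ((k : ℝ) * Δt) with hcase | hcase
        · exact ihk u ⟨hu.1, hcase⟩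
        · -- use MVT on [kΔt, (k+1)Δt]
          set a : ℝ := (k : ℝ) * Δt with ha
          set b : ℝ := ((k : ℝ) + 1) * Δt with hb
          have hab : a ≤ b := by
            have : (k : ℝ) ≤ (k : ℝ) + 1 := by linarith
            exact mul_le_mul_of_nonneg_right this hΔt.le
          have ha0 : 0 ≤ a := by positivity
          have hub : u ≤ b := by
            have : ((k : ℕ) + 1 : ℝ) * Δt = b := by push_cast [hb]; ring
            simpa [this] using hu.2
          have hforce : ∀ x ∈ Set.Ico a b,
              ‖-(gradient V₁ (xr ω x)) +
                (s : ℝ)⁻¹ • ∑ j ∈ ξ ⟨k, hkL'⟩ ω, gradient (ψ j) (xr ω x)‖ ≤ 2 * M := by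
            intro x hx
            have h1 : ‖(s : ℝ)⁻¹ • ∑ j ∈ ξ ⟨k, hkL'⟩ ω, gradient (ψ j) (xr ω x)‖ ≤ M := by
              rw [norm_smul]
              have hsum : ‖∑ j ∈ ξ ⟨k, hkL'⟩ ω, gradient (ψ j) (xr ω x)‖ ≤ (s : ℝ) * M := by
                calc ‖∑ j ∈ ξ ⟨k, hkL'⟩ ω, gradient (ψ j) (xr ω x)‖
                    ≤ ∑ j ∈ ξ ⟨k, hkL'⟩ ω, ‖gradient (ψ j) (xr ω x)‖ :=
                      norm_sum_le _ _
                  _ ≤ ∑ _j ∈ ξ ⟨k, hkL'⟩ ω, M :=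
                      Finset.sum_le_sum fun j _ => hgψ j (xr ω x)
                  _ = (s : ℝ) * M := by
                      rw [Finset.sum_const, hξc ⟨k, hkL'⟩ ω, nsmul_eq_mul]
              have hs0 : (0 : ℝ) < (s : ℝ) := by exact_mod_cast hs
              calc ‖(s : ℝ)⁻¹‖ * ‖∑ j ∈ ξ ⟨k, hkL'⟩ ω, gradient (ψ j) (xr ω x)‖
                  ≤ (s : ℝ)⁻¹ * ((s : ℝ) * M) := by
                    rw [Real.norm_eq_abs, abs_of_pos (inv_pos.2 hs0)]
                    exact mul_le_mul_of_nonneg_left hsum (inv_pos.2 hs0).le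
                _ = M := by field_simp
            calc ‖-(gradient V₁ (xr ω x)) +
                  (s : ℝ)⁻¹ • ∑ j ∈ ξ ⟨k, hkL'⟩ ω, gradient (ψ j) (xr ω x)‖
                ≤ ‖-(gradient V₁ (xr ω x))‖ +
                  ‖(s : ℝ)⁻¹ • ∑ j ∈ ξ ⟨k, hkL'⟩ ω, gradient (ψ j) (xr ω x)‖ :=
                  norm_add_le _ _
              _ ≤ M + M := by
                  refine add_le_add ?_ h1
                  rw [norm_neg]; exact hgV (xr ω x)
              _ = 2 * M := by ring
          have hderiv : ∀ x ∈ Set.Ico a b,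
              HasDerivWithinAt (pr ω)
                (-(gradient V₁ (xr ω x)) +
                  (s : ℝ)⁻¹ • ∑ j ∈ ξ ⟨k, hkL'⟩ ω, gradient (ψ j) (xr ω x))
                (Set.Ici x) x := by
            intro x hx
            have h := (hdyn ω ⟨k, hkL'⟩ x (by simpa [ha, hb] using hx)).2
            exact h.mono_of_mem_nhdsWithin (by
              simpa [ha, hb] using Ico_mem_nhdsGE_of_mem (α := ℝ) hx)
          have hm1 := norm_image_sub_le_of_norm_deriv_right_le_segment
            ((hpc ω).continuousOn) hderiv hforce u ⟨hcase.le, hub⟩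
          have hm2 : ‖pr ω a - P0 ω‖ ≤ 2 * M * a :=
            ihk a ⟨ha0, le_refl a⟩
          calc ‖pr ω u - P0 ω‖
              ≤ ‖pr ω u - pr ω a‖ + ‖pr ω a - P0 ω‖ := norm_sub_le_norm_sub_add_norm_sub _ _ _
            _ ≤ 2 * M * (u - a) + 2 * M * a := add_le_add hm1 hm2
            _ = 2 * M * u := by ring
    intro u hu
    have : u ∈ Set.Icc (0 : ℝ) ((L : ℝ) * Δt) := by rwa [hT] at hu
    exact main L le_rfl u this
  -- pointwise moment bound
  have hpt : ∀ ω, (‖pr ω t‖₊ : ℝ≥0∞) ^ 4 ≤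
      8 * (‖P0 ω‖₊ : ℝ≥0∞) ^ 4 + ENNReal.ofReal (128 * (M * T) ^ 4) := by
    intro ω
    have h1 : ‖pr ω t‖ ≤ ‖P0 ω‖ + 2 * M * T := by
      have h := key ω t ht
      have htT : t ≤ T := ht.2
      have ht0 : 0 ≤ t := ht.1
      have : ‖pr ω t‖ - ‖P0 ω‖ ≤ ‖pr ω t - P0 ω‖ := norm_sub_norm_le _ _
      nlinarith
    have h2 : ‖pr ω t‖ ^ 4 ≤ 8 * ‖P0 ω‖ ^ 4 + 128 * (M * T) ^ 4 := by
      have h0 : (0 : ℝ) ≤ ‖pr ω t‖ := norm_nonneg _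
      have h0' : (0 : ℝ) ≤ ‖P0 ω‖ := norm_nonneg _
      have hMT : (0 : ℝ) ≤ M * T := by positivity
      nlinarith [sq_nonneg (‖P0 ω‖ - 2 * M * T), sq_nonneg (‖P0 ω‖ + 2 * M * T),
        sq_nonneg (‖P0 ω‖ * (2 * M * T)), mul_nonneg h0' hMT,
        pow_le_pow_left₀ h0 h1 4]
    calc (‖pr ω t‖₊ : ℝ≥0∞) ^ 4 = ENNReal.ofReal (‖pr ω t‖ ^ 4) := by
          rw [ENNReal.ofReal_pow (norm_nonneg _), ofReal_norm, enorm_eq_nnnorm]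
      _ ≤ ENNReal.ofReal (8 * ‖P0 ω‖ ^ 4 + 128 * (M * T) ^ 4) :=
          ENNReal.ofReal_le_ofReal h2
      _ = ENNReal.ofReal (8 * ‖P0 ω‖ ^ 4) + ENNReal.ofReal (128 * (M * T) ^ 4) :=
          ENNReal.ofReal_add (by positivity) (by positivity)
      _ = 8 * (‖P0 ω‖₊ : ℝ≥0∞) ^ 4 + ENNReal.ofReal (128 * (M * T) ^ 4) := by
          rw [ENNReal.ofReal_mul (by norm_num : (0:ℝ) ≤ 8),
            ENNReal.ofReal_pow (norm_nonneg _), ofReal_norm, enorm_eq_nnnorm]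
          norm_num
  have hmeasP : Measurable fun ω => (‖P0 ω‖₊ : ℝ≥0∞) ^ 4 :=
    (hP0.nnnorm.coe_nnreal_ennreal).pow_const 4
  calc (∫⁻ ω, (‖pr ω t‖₊ : ℝ≥0∞) ^ 4 ∂μ)
      ≤ ∫⁻ ω, (8 * (‖P0 ω‖₊ : ℝ≥0∞) ^ 4 + ENNReal.ofReal (128 * (M * T) ^ 4)) ∂μ :=
        lintegral_mono hpt
    _ = 8 * (∫⁻ ω, (‖P0 ω‖₊ : ℝ≥0∞) ^ 4 ∂μ) + ENNReal.ofReal (128 * (M * T) ^ 4) := by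
        rw [lintegral_add_right _ measurable_const, lintegral_const_mul 8 hmeasP,
          lintegral_const, measure_univ, mul_one]
    _ ≤ 8 * ENNReal.ofReal K + ENNReal.ofReal (128 * (M * T) ^ 4) := by
        gcongr
    _ = ENNReal.ofReal (8 * K + 128 * (M * T) ^ 4) := by
        rw [ENNReal.ofReal_add (by positivity) (by positivity),
          ENNReal.ofReal_mul (by norm_num : (0:ℝ) ≤ 8)]
        norm_num
    _ ≤ ENNReal.ofReal ((8 * K + 128 * M ^ 4 + 1) * (1 + T ^ 4)) := by
        apply ENNReal.ofReal_le_ofReal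
        have h4 : (0:ℝ) ≤ T ^ 4 := by positivity
        have h5 : (0:ℝ) ≤ M ^ 4 := by positivity
        nlinarith [mul_nonneg hK h4, mul_nonneg h5 h4, mul_pow M T 4]
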